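/- arXiv:1402.6673 — 10 statements merged into one kernel-verified Lean document; each statement's English description precedes it below -/
import Mathlib

section
/- Every qualgebra (Q, ⊲, ⊲̃, ⋄) satisfies, for all a,b,c ∈ Q: (i) a ⊲̃ (b ⋄ c) = (a ⊲̃ c) ⊲̃ b; (ii) (a ⋄ b) ⊲̃ c = (a ⊲̃ c) ⋄ (b ⊲̃ c); (iii) (a ⊲̃ b) ⋄ b = b ⋄ a. -/
/-- Every qualgebra satisfies the three compatibility relations between `⋄` and `⊲̃`. -/
theorem qualgebra_trid_properties {Q : Type*} (tri trid dia : Q → Q → Q)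
    (h_sd : ∀ a b c, tri (tri a b) c = tri (tri a c) (tri b c))
    (h_inv : ∀ a b, trid (tri a b) b = a ∧ tri (trid a b) b = a)
    (h_idem : ∀ a, tri a a = a)
    (h_comp : ∀ a b c, tri a (dia b c) = tri (tri a b) c)
    (h_d : ∀ a b c, tri (dia a b) c = dia (tri a c) (tri b c))
    (h_comm : ∀ a b, dia a b = dia b (tri a b)) :
    (∀ a b c, trid a (dia b c) = trid (trid a c) b) ∧
    (∀ a b c, trid (dia a b) c = dia (trid a c) (trid b c)) ∧
    (∀ a b, dia (trid a b) b = dia b a) := by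
  refine ⟨fun a b c => ?_, fun a b c => ?_, fun a b => ?_⟩
  · have key : tri (trid (trid a c) b) (dia b c) = a := by
      rw [h_comp, (h_inv _ _).2, (h_inv _ _).2]
    calc trid a (dia b c) = trid (tri (trid (trid a c) b) (dia b c)) (dia b c) := by rw [key]
      _ = trid (trid a c) b := (h_inv _ _).1
  · have key : tri (dia (trid a c) (trid b c)) c = dia a b := by
      rw [h_d, (h_inv _ _).2, (h_inv _ _).2]
    calc trid (dia a b) c = trid (tri (dia (trid a c) (trid b c)) c) c := by rw [key]
      _ = dia (trid a c) (trid b c) := (h_inv _ _).1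
  · rw [h_comm, (h_inv _ _).2]
end

section
/- Let (Q, ⊲, ⊲̃, ⋄) be a qualgebra and, for a ∈ Q, let S_a : Q → Q be the right translation x ↦ x ⊲ a. Then: (i) each S_a is a bijection of Q with inverse x ↦ x ⊲̃ a; (ii) each S_a respects both operations, i.e., S_a(x ⊲ y) = S_a(x) ⊲ S_a(y) and S_a(x ⋄ y) = S_a(x) ⋄ S_a(y) for all x,y ∈ Q; (iii) S_{a⋄b} = S_b ∘ S_a for all a,b ∈ Q; (iv) S_{a⊲b} = S_b ∘ S_a ∘ S_b⁻¹ for all a,b ∈ Q. -/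
/-- In a qualgebra, the right translations `S_a : x ↦ x ⊲ a` are bijections (with inverse
`x ↦ x ⊲̃ a`) respecting both operations, and `S : a ↦ S_a` turns `⋄` into composition and
`⊲` into conjugation. -/
theorem qualgebra_right_translations {Q : Type*} (tri trid dia : Q → Q → Q)
    (h_sd : ∀ a b c, tri (tri a b) c = tri (tri a c) (tri b c))
    (h_inv : ∀ a b, trid (tri a b) b = a ∧ tri (trid a b) b = a)
    (h_idem : ∀ a, tri a a = a)
    (h_comp : ∀ a b c, tri a (dia b c) = tri (tri a b) c)
    (h_d : ∀ a b c, tri (dia a b) c = dia (tri a c) (tri b c))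
    (h_comm : ∀ a b, dia a b = dia b (tri a b)) :
    let S : Q → Q → Q := fun a x => tri x a
    (∀ a : Q, Function.Bijective (S a) ∧
      Function.LeftInverse (fun x => trid x a) (S a) ∧
      Function.RightInverse (fun x => trid x a) (S a)) ∧
    (∀ a x y : Q, S a (tri x y) = tri (S a x) (S a y)) ∧
    (∀ a x y : Q, S a (dia x y) = dia (S a x) (S a y)) ∧
    (∀ a b : Q, S (dia a b) = S b ∘ S a) ∧
    (∀ a b : Q, S (tri a b) = S b ∘ S a ∘ (fun x => trid x b)) := by
  intro S
  have hli : ∀ a, Function.LeftInverse (fun x => trid x a) (S a) :=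
    fun a x => (h_inv x a).1
  have hri : ∀ a, Function.RightInverse (fun x => trid x a) (S a) :=
    fun a x => (h_inv x a).2
  refine ⟨fun a => ⟨⟨(hli a).injective, (hri a).surjective⟩, hli a, hri a⟩,
    fun a x y => h_sd x y a, fun a x y => h_d x y a,
    fun a b => funext fun x => h_comp x a b,
    fun a b => funext fun x => ?_⟩
  show tri x (tri a b) = tri (tri (trid x b) a) b
  conv_lhs => rw [← (h_inv x b).2]
  rw [← h_sd]
end

section
/- Let (Q, ⊲, ⊲̃, ⋄) be a nonempty finite qualgebra and, for a ∈ Q, let S_a : Q → Q be the bijection x ↦ x ⊲ a. Then the image {S_a : a ∈ Q} is a subgroup of the group of permutations of Q: it contains the identity map, is closed under composition, and is closed under taking inverses. -/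
/-- For a nonempty finite qualgebra `Q`, the image `{S_a : a ∈ Q}` of the right-translation
map is a subgroup of the group of permutations of `Q`: it contains the identity, and is
closed under composition and under taking inverses. -/
theorem qualgebra_translations_subgroup {Q : Type*} [Finite Q] [Nonempty Q]
    (tri trid dia : Q → Q → Q)
    (h_sd : ∀ a b c, tri (tri a b) c = tri (tri a c) (tri b c))
    (h_inv : ∀ a b, trid (tri a b) b = a ∧ tri (trid a b) b = a)
    (h_idem : ∀ a, tri a a = a)
    (h_comp : ∀ a b c, tri a (dia b c) = tri (tri a b) c)
    (h_d : ∀ a b c, tri (dia a b) c = dia (tri a c) (tri b c))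
    (h_comm : ∀ a b, dia a b = dia b (tri a b)) :
    let SImg : Set (Q → Q) := {f | ∃ a : Q, f = fun x => tri x a}
    (id ∈ SImg) ∧
    (∀ f ∈ SImg, ∀ g ∈ SImg, f ∘ g ∈ SImg) ∧
    (∀ f ∈ SImg, ∃ g ∈ SImg, f ∘ g = id ∧ g ∘ f = id) := by
  intro SImg
  set σ : Q → Equiv.Perm Q := fun a =>
    ⟨fun x => tri x a, fun x => trid x a, fun x => (h_inv x a).1, fun x => (h_inv x a).2⟩
    with hσ
  have hcoe : ∀ a, ⇑(σ a) = fun x => tri x a := fun a => rfl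
  have hpow : ∀ (a : Q) (n : ℕ), ∃ b, ⇑(σ a ^ (n+1)) = fun x => tri x b := by
    intro a n
    induction n with
    | zero => exact ⟨a, by simpa using hcoe a⟩
    | succ n ih =>
      obtain ⟨b, hb⟩ := ih
      refine ⟨dia b a, ?_⟩
      have hstep : σ a ^ (n+2) = σ a * σ a ^ (n+1) := (pow_succ' (σ a) (n+1))
      funext x
      have : (σ a ^ (n+2)) x = (σ a) ((σ a ^ (n+1)) x) := by
        rw [hstep]; rfl
      rw [this, hb, hcoe]
      exact (h_comp x b a).symm
  -- order facts
  have horder : ∀ a : Q, ∃ m : ℕ, orderOf (σ a) = m + 1 := by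
    intro a
    have := orderOf_pos (σ a)
    exact ⟨orderOf (σ a) - 1, by omega⟩
  refine ⟨?_, ?_, ?_⟩
  · -- identity
    obtain ⟨a⟩ := ‹Nonempty Q›
    obtain ⟨m, hm⟩ := horder a
    obtain ⟨b, hb⟩ := hpow a m
    refine ⟨b, ?_⟩
    rw [← hb, ← hm, pow_orderOf_eq_one]
    rfl
  · rintro f ⟨b, rfl⟩ g ⟨c, rfl⟩
    exact ⟨dia c b, funext fun x => (h_comp x c b).symm⟩
  · rintro f ⟨a, rfl⟩
    obtain ⟨m, hm⟩ := horder a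
    obtain ⟨b, hb⟩ := hpow a (2*m)
    have h2 : σ a * σ a ^ (2*m+1) = 1 := by
      have : σ a * σ a ^ (2*m+1) = (σ a ^ (m+1))^2 := by
        rw [← pow_succ' (σ a) (2*m+1), ← pow_mul]
        congr 1
        ring
      rw [this, ← hm, ← pow_mul, pow_mul, pow_orderOf_eq_one, one_pow]
    have h2' : σ a ^ (2*m+1) * σ a = 1 := by
      have : σ a ^ (2*m+1) * σ a = (σ a ^ (m+1))^2 := by
        rw [← pow_succ (σ a) (2*m+1), ← pow_mul]
        congr 1
        ring
      rw [this, ← hm, ← pow_mul, pow_mul, pow_orderOf_eq_one, one_pow]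
    refine ⟨(fun x => tri x b), ⟨b, rfl⟩, ?_, ?_⟩
    · funext x
      have := congrArg (fun p : Equiv.Perm Q => p x) h2
      simpa [Equiv.Perm.mul_apply, hb, hcoe] using this
    · funext x
      have := congrArg (fun p : Equiv.Perm Q => p x) h2'
      simpa [Equiv.Perm.mul_apply, hb, hcoe] using this
end

section
/- Let (Q, ⊲, ⊲̃, ⋄) be a qualgebra and a ∈ Q. Define Fix(a) = {x ∈ Q : x ⊲ a = x} and Stab(a) = {x ∈ Q : a ⊲ x = a}. Then both Fix(a) and Stab(a) are sub-qualgebras of Q (i.e., closed under ⊲, ⊲̃ and ⋄), and both contain the sub-qualgebra Q_a generated by a, that is, the smallest subset of Q containing a and closed under ⊲, ⊲̃ and ⋄. -/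
/-- A subset `T` of a qualgebra is closed under the three operations. -/
def QClosed {Q : Type*} (tri trid dia : Q → Q → Q) (T : Set Q) : Prop :=
  ∀ x ∈ T, ∀ y ∈ T, tri x y ∈ T ∧ trid x y ∈ T ∧ dia x y ∈ T

/-- In a qualgebra, `Fix(a) = {x : x ⊲ a = x}` and `Stab(a) = {x : a ⊲ x = a}` are
sub-qualgebras, and both contain the sub-qualgebra generated by `a` (the smallest subset
containing `a` and closed under the three operations). -/
theorem qualgebra_fix_stab {Q : Type*} (tri trid dia : Q → Q → Q)
    (h_sd : ∀ a b c, tri (tri a b) c = tri (tri a c) (tri b c))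
    (h_inv : ∀ a b, trid (tri a b) b = a ∧ tri (trid a b) b = a)
    (h_idem : ∀ a, tri a a = a)
    (h_comp : ∀ a b c, tri a (dia b c) = tri (tri a b) c)
    (h_d : ∀ a b c, tri (dia a b) c = dia (tri a c) (tri b c))
    (h_comm : ∀ a b, dia a b = dia b (tri a b))
    (a : Q) :
    QClosed tri trid dia {x | tri x a = x} ∧
    QClosed tri trid dia {x | tri a x = a} ∧
    ⋂₀ {T : Set Q | a ∈ T ∧ QClosed tri trid dia T} ⊆ {x | tri x a = x} ∧
    ⋂₀ {T : Set Q | a ∈ T ∧ QClosed tri trid dia T} ⊆ {x | tri a x = a} := by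
  have cancel : ∀ x y b : Q, tri x b = tri y b → x = y := by
    intro x y b h
    have := congrArg (fun z => trid z b) h
    simpa [(h_inv x b).1, (h_inv y b).1] using this
  have fixC : QClosed tri trid dia {x | tri x a = x} := by
    intro x hx y hy
    simp only [Set.mem_setOf_eq] at hx hy ⊢
    refine ⟨by rw [h_sd, hx, hy], ?_, by rw [h_d, hx, hy]⟩
    apply cancel _ _ y
    rw [(h_inv x y).2]
    have : tri (tri (trid x y) a) (tri y a) = tri x a := by
      rw [← h_sd, (h_inv x y).2]
    rw [hy, hx] at this
    exact this
  have stabC : QClosed tri trid dia {x | tri a x = a} := by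
    intro x hx y hy
    simp only [Set.mem_setOf_eq] at hx hy ⊢
    have hdia : tri a (dia x y) = a := by rw [h_comp, hx, hy]
    refine ⟨?_, ?_, hdia⟩
    · have := hdia
      rw [h_comm x y, h_comp, hy] at this
      exact this
    · apply cancel _ _ y
      have : tri a (dia (trid x y) y) = a := by
        rw [h_comm, (h_inv x y).2, h_comp, hy, hx]
      rw [h_comp] at this
      rw [this, hy]
  refine ⟨fixC, stabC, ?_, ?_⟩
  · exact fun x hx => hx _ ⟨h_idem a, fixC⟩
  · exact fun x hx => hx _ ⟨h_idem a, stabC⟩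
end

section
/- A non-trivial qualgebra or squandle has at least 4 elements. Precisely: (i) if (Q, ⊲, ⊲̃, ς) is a squandle whose underlying set has at most 3 elements, then a ⊲ b = a for all a,b ∈ Q; (ii) if (Q, ⊲, ⊲̃, ⋄) is a qualgebra whose underlying set has at most 3 elements, then a ⊲ b = a for all a,b ∈ Q. -/
/-- In a finite type of cardinality at most 3, any element equals one of
three pairwise distinct elements. -/
lemma mem3_of_card_le_three {Q : Type} [Finite Q] (hcard : Nat.card Q ≤ 3)
    (b a c : Q) (hba : b ≠ a) (hbc : b ≠ c) (hac : a ≠ c) :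
    ∀ x : Q, x = b ∨ x = a ∨ x = c := by
  intro x
  by_contra h
  push_neg at h
  obtain ⟨hxb, hxa, hxc⟩ := h
  have hinj : Function.Injective (![b, a, c, x] : Fin 4 → Q) := by
    intro i j hij
    fin_cases i <;> fin_cases j <;> simp_all
  have := Nat.card_le_card_of_injective _ hinj
  simp [Nat.card_eq_fintype_card] at this
  omega

/-- A non-trivial qualgebra or squandle has at least 4 elements: (i) any squandle with at
most 3 elements is trivial; (ii) any qualgebra with at most 3 elements is trivial. -/
theorem small_qualgebra_squandle_trivial :
    (∀ (Q : Type) (_ : Finite Q) (tri trid : Q → Q → Q) (sq : Q → Q),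
      (∀ a b c, tri (tri a b) c = tri (tri a c) (tri b c)) →
      (∀ a b, trid (tri a b) b = a ∧ tri (trid a b) b = a) →
      (∀ a, tri a a = a) →
      (∀ a b, tri a (sq b) = tri (tri a b) b) →
      (∀ a b, tri (sq a) b = sq (tri a b)) →
      Nat.card Q ≤ 3 → ∀ a b : Q, tri a b = a) ∧
    (∀ (Q : Type) (_ : Finite Q) (tri trid dia : Q → Q → Q),
      (∀ a b c, tri (tri a b) c = tri (tri a c) (tri b c)) →
      (∀ a b, trid (tri a b) b = a ∧ tri (trid a b) b = a) →
      (∀ a, tri a a = a) →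
      (∀ a b c, tri a (dia b c) = tri (tri a b) c) →
      (∀ a b c, tri (dia a b) c = dia (tri a c) (tri b c)) →
      (∀ a b, dia a b = dia b (tri a b)) →
      Nat.card Q ≤ 3 → ∀ a b : Q, tri a b = a) := by
  constructor
  · -- Squandle case
    intro Q _ tri trid sq hsd hinv hidem hsq1 hsq2 hcard a b
    by_contra hne
    -- right translation by b is injective
    have hinj : ∀ x y : Q, tri x b = tri y b → x = y := by
      intro x y h
      have hx := (hinv x b).1
      have hy := (hinv y b).1
      rw [← hx, h, hy]
    have hrb : tri b b = b := hidem b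
    have hab : b ≠ a := by
      intro h; exact hne (h ▸ hrb)
    have hbr : b ≠ tri a b := by
      intro h
      exact hab (hinj b a (by rw [hrb, ← h]))
    have har : a ≠ tri a b := fun h => hne h.symm
    have mem3 := mem3_of_card_le_three hcard b a (tri a b) hab hbr har
    -- tri (tri a b) b = a
    have hrra : tri (tri a b) b = a := by
      rcases mem3 (tri (tri a b) b) with h | h | h
      · exact absurd (hinj (tri a b) b (by rw [h, hrb])) (Ne.symm hbr)
      · exact h
      · exact absurd (hinj (tri a b) a h) (Ne.symm har)
    -- sq b is fixed by right translation by b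
    have hfix : tri (sq b) b = sq b := by
      have := hsq2 b b
      rw [hrb] at this
      exact this
    have hsqb : sq b = b := by
      rcases mem3 (sq b) with h | h | h
      · exact h
      · rw [h] at hfix; exact absurd hfix hne
      · rw [h] at hfix
        rw [hrra] at hfix
        exact absurd hfix har
    have := hsq1 a b
    rw [hsqb, hrra] at this
    exact hne this
  · -- Qualgebra case
    intro Q _ tri trid dia hsd hinv hidem hcomp hdist hcomm hcard a b
    by_contra hne
    have hinj : ∀ x y : Q, tri x b = tri y b → x = y := by
      intro x y h
      have hx := (hinv x b).1
      have hy := (hinv y b).1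
      rw [← hx, h, hy]
    have hrb : tri b b = b := hidem b
    have hab : b ≠ a := by
      intro h; exact hne (h ▸ hrb)
    have hbr : b ≠ tri a b := by
      intro h
      exact hab (hinj b a (by rw [hrb, ← h]))
    have har : a ≠ tri a b := fun h => hne h.symm
    have mem3 := mem3_of_card_le_three hcard b a (tri a b) hab hbr har
    have hrra : tri (tri a b) b = a := by
      rcases mem3 (tri (tri a b) b) with h | h | h
      · exact absurd (hinj (tri a b) b (by rw [h, hrb])) (Ne.symm hbr)
      · exact h
      · exact absurd (hinj (tri a b) a h) (Ne.symm har)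
    -- dia b b is fixed by right translation by b
    have hfix : tri (dia b b) b = dia b b := by
      have := hdist b b b
      rw [hrb] at this
      exact this
    have hdbb : dia b b = b := by
      rcases mem3 (dia b b) with h | h | h
      · exact h
      · rw [h] at hfix; exact absurd hfix hne
      · rw [h] at hfix
        rw [hrra] at hfix
        exact absurd hfix har
    have := hcomp a b b
    rw [hdbb, hrra] at this
    exact hne this
end

section
/- Let (Q, ⊲, ⊲̃, ⋄) be a qualgebra, a ∈ Q, and let Q_a be the sub-qualgebra generated by a, i.e., the smallest subset of Q containing a and closed under ⊲, ⊲̃ and ⋄. Then Q_a is trivial: for all x, y ∈ Q_a one has x ⊲ y = x, and moreover the restriction of ⋄ to Q_a is commutative: x ⋄ y = y ⋄ x for all x, y ∈ Q_a. -/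
/-- In a qualgebra, the sub-qualgebra generated by a single element `a` is trivial
(`x ⊲ y = x` on it) and the restriction of `⋄` to it is commutative. -/
theorem qualgebra_locally_trivial {Q : Type*} (tri trid dia : Q → Q → Q)
    (h_sd : ∀ a b c, tri (tri a b) c = tri (tri a c) (tri b c))
    (h_inv : ∀ a b, trid (tri a b) b = a ∧ tri (trid a b) b = a)
    (h_idem : ∀ a, tri a a = a)
    (h_comp : ∀ a b c, tri a (dia b c) = tri (tri a b) c)
    (h_d : ∀ a b c, tri (dia a b) c = dia (tri a c) (tri b c))
    (h_comm : ∀ a b, dia a b = dia b (tri a b))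
    (a : Q) :
    ∀ x ∈ ⋂₀ {T : Set Q | a ∈ T ∧ QClosed tri trid dia T},
      ∀ y ∈ ⋂₀ {T : Set Q | a ∈ T ∧ QClosed tri trid dia T},
        tri x y = x ∧ dia x y = dia y x := by
  -- injectivity of right translation
  have hinj : ∀ u v c : Q, tri u c = tri v c → u = v := by
    intro u v c h
    have := congrArg (fun w => trid w c) h
    simpa [(h_inv u c).1, (h_inv v c).1] using this
  set gen : Set Q := ⋂₀ {T : Set Q | a ∈ T ∧ QClosed tri trid dia T} with hgen
  -- Step 1: every element of gen satisfies tri x a = x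
  have step1 : ∀ x ∈ gen, tri x a = x := by
    intro x hx
    have hT : ({x : Q | tri x a = x} : Set Q) ∈
        {T : Set Q | a ∈ T ∧ QClosed tri trid dia T} := by
      constructor
      · exact h_idem a
      · intro u hu v hv
        refine ⟨?_, ?_, ?_⟩
        · show tri (tri u v) a = tri u v
          rw [h_sd, hu, hv]
        · show tri (trid u v) a = trid u v
          apply hinj _ _ v
          have h1 : tri (tri (trid u v) a) v
              = tri (tri (trid u v) v) a := by
            rw [h_sd (trid u v) v a, hv]
          rw [h1, (h_inv u v).2, hu]
        · show tri (dia u v) a = dia u v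
          rw [h_d, hu, hv]
    exact Set.mem_sInter.mp hx {x : Q | tri x a = x} hT
  -- Step 2: the set of y with tri x y = x for all x ∈ gen contains a and is closed
  have step2 : ∀ y ∈ gen, ∀ x ∈ gen, tri x y = x := by
    intro y hy
    have hS : ({y : Q | ∀ x ∈ gen, tri x y = x} : Set Q) ∈
        {T : Set Q | a ∈ T ∧ QClosed tri trid dia T} := by
      constructor
      · intro x hx; exact step1 x hx
      · intro u hu v hv
        refine ⟨?_, ?_, ?_⟩
        · intro x hx
          show tri x (tri u v) = x
          have h1 : tri (tri x u) v = tri (tri x v) (tri u v) := h_sd x u v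
          rw [hu x hx, hv x hx] at h1
          exact h1.symm
        · intro x hx
          show tri x (trid u v) = x
          apply hinj _ _ v
          have h1 : tri (tri x (trid u v)) v
              = tri (tri x v) (tri (trid u v) v) := h_sd _ _ _
          rw [hv x hx, (h_inv u v).2, hu x hx] at h1
          rw [h1, hv x hx]
        · intro x hx
          show tri x (dia u v) = x
          rw [h_comp, hu x hx, hv x hx]
    exact Set.mem_sInter.mp hy _ hS
  intro x hx y hy
  have h1 : tri x y = x := step2 y hy x hx
  refine ⟨h1, ?_⟩
  rw [h_comm x y, h1]
end

section
/- For every choice of parameters u, v ∈ {p, q, s}, the operation ⋄ on P satisfies: (i) ⋄ is commutative; (ii) ⋄ is not cancellative, i.e., there exist x, y, z ∈ P with x ⋄ y = x ⋄ z and y ≠ z; (iii) ⋄ has a two-sided neutral element if and only if u = q; (iv) ⋄ is associative if and only if u = s and (v = s or v = q); (v) ⋄ is never simultaneously unital and associative. -/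
/-- The 4-element set `P = {p, q, r, s}`. -/
inductive P4 : Type
  | p | q | r | s
  deriving DecidableEq

/-- The involution `τ` of `P` exchanging `p` and `q` and fixing `r` and `s`. -/
def tau : P4 → P4
  | .p => .q
  | .q => .p
  | .r => .r
  | .s => .s

/-- The qualgebra operation `⋄` on `P` with parameters `u, v ∈ {p, q, s}`. -/
def diaP (u v : P4) : P4 → P4 → P4
  | .r, .r => .s
  | .r, _ => .r
  | _, .r => .r
  | .s, .s => .s
  | .q, .s => u
  | .s, .q => u
  | .p, .s => tau u
  | .s, .p => tau u
  | .p, .q => .s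
  | .q, .p => .s
  | .q, .q => v
  | .p, .p => tau v

instance : Fintype P4 := ⟨{.p,.q,.r,.s}, by intro x; cases x <;> simp⟩

/-- Properties of the operation `⋄_{u,v}` on `P` for `u, v ∈ {p, q, s}`: it is always
commutative and never cancellative; it is unital iff `u = q`; it is associative iff
`u = s` and `v ∈ {s, q}`; it is never simultaneously unital and associative. -/
theorem qualgebra4_operation_properties (u v : P4)
    (hu : u ∈ ({P4.p, P4.q, P4.s} : Set P4)) (hv : v ∈ ({P4.p, P4.q, P4.s} : Set P4)) :
    (∀ x y : P4, diaP u v x y = diaP u v y x) ∧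
    (∃ x y z : P4, diaP u v x y = diaP u v x z ∧ y ≠ z) ∧
    ((∃ e : P4, ∀ x : P4, diaP u v e x = x ∧ diaP u v x e = x) ↔ u = P4.q) ∧
    ((∀ x y z : P4, diaP u v (diaP u v x y) z = diaP u v x (diaP u v y z)) ↔
      (u = P4.s ∧ (v = P4.s ∨ v = P4.q))) ∧
    ¬ ((∃ e : P4, ∀ x : P4, diaP u v e x = x ∧ diaP u v x e = x) ∧
       (∀ x y z : P4, diaP u v (diaP u v x y) z = diaP u v x (diaP u v y z))) := by
  simp only [Set.mem_insert_iff, Set.mem_singleton_iff] at hu hv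
  rcases hu with rfl|rfl|rfl <;> rcases hv with rfl|rfl|rfl <;> decide
end

section
/- Let n be an integer with n > 2, and consider the dihedral quandle operation on ℤ/nℤ given by a ⊲ b = 2b − a (mod n). Then there exists no binary operation ⋄ on ℤ/nℤ satisfying the translation composability axiom a ⊲ (b ⋄ c) = (a ⊲ b) ⊲ c for all a, b, c ∈ ℤ/nℤ. In particular, the dihedral quandle on ℤ/nℤ (n > 2) cannot be turned into a qualgebra. -/
/-- For `n > 2`, the dihedral quandle `a ⊲ b = 2b − a` on `ℤ/nℤ` admits no binary
operation `⋄` satisfying the translation composability axiom `a ⊲ (b ⋄ c) = (a ⊲ b) ⊲ c`;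
in particular, it cannot be turned into a qualgebra. -/
theorem dihedral_no_qualgebra (n : ℕ) (hn : 2 < n) :
    ¬ ∃ dia : ZMod n → ZMod n → ZMod n,
        ∀ a b c : ZMod n, 2 * dia b c - a = 2 * c - (2 * b - a) := by
  rintro ⟨dia, h⟩
  have h0 := h 0 0 0
  have h1 := h 1 0 0
  have h2 : (2 : ZMod n) = 0 := by
    linear_combination h0 - h1
  have : (n : ℕ) ∣ 2 := by
    have : ((2 : ℕ) : ZMod n) = 0 := by exact_mod_cast h2
    exact (ZMod.natCast_eq_zero_iff 2 n).mp this
  exact absurd (Nat.le_of_dvd (by norm_num) this) (by omega)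
end

section
/- Let (Q, ⊲, ⊲̃, ⋄) be a qualgebra and χ, λ : Q × Q → ℤ two maps. If for all a, b, c ∈ Q one has (C4) χ(a⋄b, c) + λ(a⊲c, b⊲c) = χ(a,c) + χ(b,c) + λ(a,b) and (C5) χ(a,b) + λ(a,b) = λ(b, a⊲b), then for all a, b, c ∈ Q one also has (C1) χ(a,b) + χ(a⊲b, c) = χ(a⊲c, b⊲c) + χ(a,c) and (C2) χ(a,a) = 0. -/
/-- For maps `χ, λ : Q × Q → ℤ` on a qualgebra `Q`, the 2-cocycle conditions (C1) and (C2)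
follow from conditions (C4) and (C5). -/
theorem qualgebra_cocycle_redundant_axioms {Q : Type*} (tri trid dia : Q → Q → Q)
    (h_sd : ∀ a b c, tri (tri a b) c = tri (tri a c) (tri b c))
    (h_inv : ∀ a b, trid (tri a b) b = a ∧ tri (trid a b) b = a)
    (h_idem : ∀ a, tri a a = a)
    (h_comp : ∀ a b c, tri a (dia b c) = tri (tri a b) c)
    (h_d : ∀ a b c, tri (dia a b) c = dia (tri a c) (tri b c))
    (h_comm : ∀ a b, dia a b = dia b (tri a b))
    (chi lam : Q → Q → ℤ)
    (hC4 : ∀ a b c, chi (dia a b) c + lam (tri a c) (tri b c)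
      = chi a c + chi b c + lam a b)
    (hC5 : ∀ a b, chi a b + lam a b = lam b (tri a b)) :
    (∀ a b c, chi a b + chi (tri a b) c = chi (tri a c) (tri b c) + chi a c) ∧
    (∀ a, chi a a = 0) := by
  constructor
  · intro a b c
    have h1 := hC4 a b c
    have h2 := hC4 b (tri a b) c
    rw [← h_comm a b] at h2
    have h3 := hC5 a b
    have h4 := hC5 (tri a c) (tri b c)
    rw [← h_sd a b c] at h4
    linarith
  · intro a
    have h := hC5 a a
    rw [h_idem a] at h
    linarith
end

section
/- Let (Q, ⊲₀, ⋄) be a trivial qualgebra (a ⊲₀ b = a for all a,b, and ⋄ is commutative), equipped with a linear order ≤. Let SF(Q) be the abelian group of all symmetric forms λ : Q × Q → ℤ (λ(a,b) = λ(b,a)), and let ABF(Q) be the abelian group of all antisymmetric bilinear forms χ : Q × Q → ℤ (χ(a,b) + χ(b,a) = 0 and χ(a, b⋄c) = χ(a,b) + χ(a,c)). For χ ∈ ABF(Q), define λ_χ(a,b) = 0 if a ≤ b and λ_χ(a,b) = χ(b,a) otherwise. Then the abelian group Z²(Q) of qualgebra 2-cocycles of Q is the internal direct sum of the subgroup ℒ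 = {(0, λ) : λ ∈ SF(Q)} and the subgroup 𝒳 = {(χ, λ_χ) : χ ∈ ABF(Q)}; in particular Z²(Q) ≅ SF(Q) ⊕ ABF(Q). -/
/-- The five qualgebra 2-cocycle conditions (C1)–(C5) for a pair of maps
`x = (χ, λ) : (Q × Q → ℤ) × (Q × Q → ℤ)`. -/
def IsQACocycle {Q : Type*} (tri dia : Q → Q → Q)
    (x : (Q × Q → ℤ) × (Q × Q → ℤ)) : Prop :=
  ∀ a b c : Q,
    x.1 (a, b) + x.1 (tri a b, c) = x.1 (tri a c, tri b c) + x.1 (a, c) ∧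
    x.1 (a, a) = 0 ∧
    x.1 (a, dia b c) = x.1 (a, b) + x.1 (tri a b, c) ∧
    x.1 (dia a b, c) + x.2 (tri a c, tri b c) = x.1 (a, c) + x.1 (b, c) + x.2 (a, b) ∧
    x.1 (a, b) + x.2 (a, b) = x.2 (b, tri a b)

/-- For a trivial qualgebra `(Q, ⊲₀, ⋄)` (with `a ⊲₀ b = a` and `⋄` commutative), endowed
with a linear order, the group `Z²(Q)` of qualgebra 2-cocycles is the internal direct sum
of the subgroup `ℒ = {(0, λ) : λ symmetric}` and the subgroup
`𝒳 = {(χ, λ_χ) : χ antisymmetric bilinear}`; in particular `Z²(Q) ≅ SF(Q) ⊕ ABF(Q)`. -/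
theorem trivial_qualgebra_cocycles_direct_sum {Q : Type*} [LinearOrder Q]
    (dia : Q → Q → Q) (h_comm : ∀ a b, dia a b = dia b a) :
    let tri : Q → Q → Q := fun a _ => a
    let Z2 : Set ((Q × Q → ℤ) × (Q × Q → ℤ)) := {x | IsQACocycle tri dia x}
    let L : Set ((Q × Q → ℤ) × (Q × Q → ℤ)) :=
      {x | x.1 = 0 ∧ ∀ a b : Q, x.2 (a, b) = x.2 (b, a)}
    let X : Set ((Q × Q → ℤ) × (Q × Q → ℤ)) :=
      {x | (∀ a b : Q, x.1 (a, b) + x.1 (b, a) = 0) ∧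
           (∀ a b c : Q, x.1 (a, dia b c) = x.1 (a, b) + x.1 (a, c)) ∧
           (∀ a b : Q, x.2 (a, b) = if a ≤ b then 0 else x.1 (b, a))}
    L ⊆ Z2 ∧ X ⊆ Z2 ∧
    ((0 : (Q × Q → ℤ) × (Q × Q → ℤ)) ∈ L ∧ (∀ x ∈ L, ∀ y ∈ L, x + y ∈ L) ∧
      (∀ x ∈ L, -x ∈ L)) ∧
    ((0 : (Q × Q → ℤ) × (Q × Q → ℤ)) ∈ X ∧ (∀ x ∈ X, ∀ y ∈ X, x + y ∈ X) ∧
      (∀ x ∈ X, -x ∈ X)) ∧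
    L ∩ X = {0} ∧
    (∀ z ∈ Z2, ∃ l ∈ L, ∃ x ∈ X, z = l + x) := by
  intro tri Z2 L X
  refine ⟨?_, ?_, ?_, ?_, ?_, ?_⟩
  · -- L ⊆ Z2
    rintro x ⟨h1, h2⟩ a b c
    simp only [tri, h1, Pi.zero_apply, Prod.fst]
    refine ⟨trivial, trivial, by ring, by ring, ?_⟩
    simpa using h2 a b
  · -- X ⊆ Z2
    rintro x ⟨hA, hB, hL⟩ a b c
    have hself : ∀ d : Q, x.1 (d, d) = 0 := by
      intro d; have := hA d d; omega
    refine ⟨by ring, hself a, hB a b c, ?_, ?_⟩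
    · -- C4
      have h1 := hA (dia a b) c
      have h2 := hB c a b
      have h3 := hA a c
      have h4 := hA b c
      simp only [tri]
      omega
    · -- C5
      simp only [tri]
      rw [hL a b, hL b a]
      split_ifs with hab hba hba
      · have : a = b := le_antisymm hab hba
        subst this; simpa using hself a
      · ring
      · exact hA a b
      · exact absurd (le_of_not_ge hab) hba
  · -- L subgroup conditions
    refine ⟨⟨rfl, fun a b => rfl⟩, ?_, ?_⟩
    · rintro x ⟨hx1, hx2⟩ y ⟨hy1, hy2⟩
      refine ⟨?_, ?_⟩
      · show x.1 + y.1 = 0; rw [hx1, hy1]; simp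
      · intro a b
        show x.2 (a, b) + y.2 (a, b) = x.2 (b, a) + y.2 (b, a)
        rw [hx2 a b, hy2 a b]
    · rintro x ⟨hx1, hx2⟩
      refine ⟨?_, ?_⟩
      · show -x.1 = 0; rw [hx1]; simp
      · intro a b
        show -x.2 (a, b) = -x.2 (b, a)
        rw [hx2 a b]
  · -- X subgroup conditions
    refine ⟨⟨fun a b => by simp, fun a b c => by simp, fun a b => by simp⟩, ?_, ?_⟩
    · rintro x ⟨hxA, hxB, hxL⟩ y ⟨hyA, hyB, hyL⟩
      refine ⟨?_, ?_, ?_⟩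
      · intro a b
        show x.1 (a, b) + y.1 (a, b) + (x.1 (b, a) + y.1 (b, a)) = 0
        have := hxA a b; have := hyA a b; omega
      · intro a b c
        show x.1 (a, dia b c) + y.1 (a, dia b c) =
          x.1 (a, b) + y.1 (a, b) + (x.1 (a, c) + y.1 (a, c))
        have := hxB a b c; have := hyB a b c; omega
      · intro a b
        show x.2 (a, b) + y.2 (a, b) = if a ≤ b then 0 else x.1 (b, a) + y.1 (b, a)
        rw [hxL a b, hyL a b]
        split_ifs <;> ring
    · rintro x ⟨hxA, hxB, hxL⟩
      refine ⟨?_, ?_, ?_⟩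
      · intro a b
        show -x.1 (a, b) + -x.1 (b, a) = 0
        have := hxA a b; omega
      · intro a b c
        show -x.1 (a, dia b c) = -x.1 (a, b) + -x.1 (a, c)
        have := hxB a b c; omega
      · intro a b
        show -x.2 (a, b) = if a ≤ b then 0 else -x.1 (b, a)
        rw [hxL a b]
        split_ifs <;> ring
  · -- L ∩ X = {0}
    ext x
    constructor
    · rintro ⟨⟨h1, _⟩, _, _, hL⟩
      have : x.2 = 0 := by
        funext p
        obtain ⟨a, b⟩ := p
        rw [hL a b]
        split_ifs <;> simp [h1]
      simp only [Set.mem_singleton_iff]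
      exact Prod.ext h1 this
    · rintro rfl
      exact ⟨⟨rfl, fun a b => rfl⟩,
        fun a b => by simp, fun a b c => by simp, fun a b => by simp⟩
  · -- decomposition
    intro z hz
    have hC2 : ∀ a : Q, z.1 (a, a) = 0 := fun a => (hz a a a).2.1
    have hC3 : ∀ a b c : Q, z.1 (a, dia b c) = z.1 (a, b) + z.1 (a, c) :=
      fun a b c => (hz a b c).2.2.1
    have hC5 : ∀ a b : Q, z.1 (a, b) + z.2 (a, b) = z.2 (b, a) :=
      fun a b => (hz a b b).2.2.2.2
    have hA : ∀ a b : Q, z.1 (a, b) + z.1 (b, a) = 0 := by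
      intro a b
      have := hC5 a b; have := hC5 b a; omega
    set lc : Q × Q → ℤ := fun p => if p.1 ≤ p.2 then 0 else z.1 (p.2, p.1) with hlc
    refine ⟨(0, z.2 - lc), ⟨rfl, ?_⟩, (z.1, lc), ⟨hA, hC3, fun a b => rfl⟩, ?_⟩
    · intro a b
      show z.2 (a, b) - lc (a, b) = z.2 (b, a) - lc (b, a)
      have h1 := hC5 a b
      have h2 := hC5 b a
      simp only [hlc]
      split_ifs with hab hba hba
      · have : a = b := le_antisymm hab hba
        subst this; rfl
      · omega
      · omega
      · exact absurd (le_of_not_ge hab) hba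
    · refine Prod.ext ?_ ?_
      · show z.1 = 0 + z.1; simp
      · show z.2 = (z.2 - lc) + lc; simp
end
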